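/- Every connected vertex transitive digraph is strongly connected, i.e., for any two vertices u, v there is a directed path from u to v. -/

import Mathlib

/-- A digraph is vertex transitive if for any two vertices `u, v` there is an
automorphism of the digraph mapping `u` to `v`. -/
def Digraph.IsVertexTransitive {V : Type*} (D : Digraph V) : Prop :=
  ∀ u v : V, ∃ e : V ≃ V, (∀ x y, D.Adj (e x) (e y) ↔ D.Adj x y) ∧ e u = v

/-- The underlying undirected (simple) graph of a digraph. -/
def Digraph.underlying {V : Type*} (D : Digraph V) : SimpleGraph V where
  Adj x y := x ≠ y ∧ (D.Adj x y ∨ D.Adj y x)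
  symm := ⟨fun x y h => ⟨h.1.symm, h.2.symm⟩⟩
  loopless := ⟨fun x h => h.1 rfl⟩

/-- `D.HasDirPathFromTo u v n` : there is a directed path (distinct vertices) of length
`n` from `u` to `v` in `D`. -/
def Digraph.HasDirPathFromTo {V : Type*} (D : Digraph V) (u v : V) (n : ℕ) : Prop :=
  ∃ f : Fin (n + 1) → V, Function.Injective f ∧ f 0 = u ∧ f (Fin.last n) = v ∧
    ∀ i : Fin n, D.Adj (f i.castSucc) (f i.succ)


private lemma reach_back {V : Type*} [Fintype V] (D : Digraph V)
    (htrans : D.IsVertexTransitive) {x y : V} (h : D.Adj x y) :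
    Relation.ReflTransGen D.Adj y x := by
  classical
  obtain ⟨e, he, hex⟩ := htrans x y
  have hpow : ∀ (m : ℕ) (a b : V), D.Adj ((e ^ m) a) ((e ^ m) b) ↔ D.Adj a b := by
    intro m
    induction m with
    | zero => intro a b; simp
    | succ m ih =>
      intro a b
      rw [pow_succ, Equiv.Perm.mul_apply, Equiv.Perm.mul_apply, ih (e a) (e b), he]
  have hxy : D.Adj x (e x) := by rw [hex]; exact h
  have hchain : ∀ n : ℕ, Relation.ReflTransGen D.Adj (e x) ((e ^ (n + 1)) x) := by
    intro n
    induction n with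
    | zero => simp [Relation.ReflTransGen.refl]
    | succ n ih =>
      refine ih.tail ?_
      have h1 : D.Adj ((e ^ (n+1)) x) ((e ^ (n+1)) (e x)) := (hpow (n+1) x (e x)).mpr hxy
      have h2 : (e ^ (n + 1 + 1)) x = (e ^ (n+1)) (e x) := by
        rw [pow_succ, Equiv.Perm.mul_apply]
      rw [h2]; exact h1
  have hk : 0 < orderOf e := orderOf_pos e
  obtain ⟨m, hm⟩ := Nat.exists_eq_add_of_lt hk
  have hmain := hchain m
  have hord : e ^ (m + 1) = 1 := by
    rw [show m + 1 = orderOf e by omega]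
    exact pow_orderOf_eq_one e
  rw [hord] at hmain
  simpa [hex] using hmain

private lemma exists_dirpath_list {V : Type*} (D : Digraph V) {u v : V}
    (h : Relation.ReflTransGen D.Adj u v) :
    ∃ l : List V, l ≠ [] ∧ l.head? = some u ∧ l.getLast? = some v ∧
      l.Chain' D.Adj ∧ l.Nodup := by
  induction h with
  | refl => exact ⟨[u], by simp, rfl, rfl, List.isChain_singleton _, by simp⟩
  | @tail b c hub hbc ih =>
    obtain ⟨l, hne, hhd, hlast, hchain, hnd⟩ := ih
    by_cases hc : c ∈ l
    · obtain ⟨s, t, rfl⟩ := List.append_of_mem hc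
      have hpfx : (s ++ [c]) <+: s ++ c :: t := ⟨t, by simp⟩
      refine ⟨s ++ [c], by simp, ?_, List.getLast?_concat, hchain.prefix hpfx,
        hnd.sublist hpfx.sublist⟩
      rw [← hhd]; cases s <;> simp
    · refine ⟨l ++ [c], by simp, ?_, List.getLast?_concat, ?_, ?_⟩
      · rw [List.head?_append_of_ne_nil l hne]; exact hhd
      · apply List.isChain_append.mpr
        refine ⟨hchain, by simp, ?_⟩
        intro x hx y hy
        simp only [List.head?_cons, Option.mem_some_iff] at hy
        rw [hlast] at hx
        simp only [Option.mem_some_iff] at hx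
        subst hx; subst hy; exact hbc
      · rw [List.nodup_append]
        exact ⟨hnd, by simp, fun a ha b hb => by simp at hb; subst hb; exact fun h => hc (h ▸ ha)⟩

theorem vertexTransitive_connected_stronglyConnected' {V : Type*} [Fintype V]
    (D : Digraph V)
    (hirr : ∀ v : V, ¬ D.Adj v v)
    (hconn : D.underlying.Connected)
    (htrans : D.IsVertexTransitive) :
    ∀ u v : V, ∃ n : ℕ, ∃ f : Fin (n + 1) → V, Function.Injective f ∧ f 0 = u ∧
      f (Fin.last n) = v ∧ ∀ i : Fin n, D.Adj (f i.castSucc) (f i.succ) := by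
  intro u v
  -- Step 1: reachability
  have hstep : ∀ a b : V, D.underlying.Adj a b → Relation.ReflTransGen D.Adj a b := by
    intro a b hab
    rcases (show a ≠ b ∧ (D.Adj a b ∨ D.Adj b a) from hab).2 with h | h
    · exact Relation.ReflTransGen.single h
    · exact reach_back D htrans h
  have hreach : Relation.ReflTransGen D.Adj u v := by
    obtain ⟨w⟩ := hconn.1 u v
    induction w with
    | nil => exact Relation.ReflTransGen.refl
    | cons h p ih => exact (hstep _ _ h).trans ih
  -- Step 2: extract a nodup list
  obtain ⟨l, hne, hhd, hlast, hchain, hnd⟩ := exists_dirpath_list D hreach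
  -- Step 3: convert to Fin function
  have hlen : l.length = (l.length - 1) + 1 := by
    have := List.length_pos_iff.mpr hne; omega
  refine ⟨l.length - 1, fun i => l.get (Fin.cast hlen.symm i), ?_, ?_, ?_, ?_⟩
  · exact (List.nodup_iff_injective_get.mp hnd).comp (Fin.cast_injective _)
  · have h0 : l.get ⟨0, by omega⟩ = u := by
      have := List.head?_eq_head hne
      rw [hhd] at this
      simpa [List.head_eq_getElem] using this.symm
    simpa using h0
  · have hL : l.getLast hne = v := by
      rw [List.getLast?_eq_getLast hne] at hlast
      simpa using hlast
    rw [← hL, List.getLast_eq_getElem]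
    rfl
  · intro i
    have := List.isChain_iff_getElem.mp hchain i (by have := i.2; omega)
    simpa [Fin.castSucc, Fin.succ] using this

/-- Every connected vertex transitive digraph is strongly connected: for any two vertices
`u, v` there is a directed path from `u` to `v`. -/
theorem vertexTransitive_connected_stronglyConnected {V : Type*} [Fintype V]
    (D : Digraph V)
    (hirr : ∀ v : V, ¬ D.Adj v v)
    (hconn : D.underlying.Connected)
    (htrans : D.IsVertexTransitive) :
    ∀ u v : V, ∃ n : ℕ, D.HasDirPathFromTo u v n :=
  vertexTransitive_connected_stronglyConnected' D hirr hconn htrans
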